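/- Let u ∈ H¹(ℝⁿ) (real or complex valued) and for k < n define μ_k(x) = ∫_{ℝ^{n-k}} |u(x,y)|² dy for x ∈ ℝ^k. Then √μ_k ∈ H¹(ℝ^k) and ∫_{ℝ^k} |∇√μ_k|² ≤ ∫_{ℝⁿ} |∇_x u(x,y)|² dx dy (Hoffmann-Ostenhof inequality). -/

import Mathlib

set_option maxHeartbeats 1000000

open MeasureTheory Filter Topology ENNReal

variable {k : ℕ}

local notation "E" => EuclideanSpace ℝ (Fin k)

lemma transCont (h : EuclideanSpace ℝ (Fin k) → ℝ) (hh : Integrable h volume) :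
    Tendsto (fun v : EuclideanSpace ℝ (Fin k) =>
      ∫⁻ x, ENNReal.ofReal |h (x + v) - h x| ∂volume) (𝓝 0) (𝓝 0) := by
  haveI : Fact ((1:ℝ≥0∞) ≤ 1) := ⟨le_rfl⟩
  set ν : Measure E := volume
  have hmem : MemLp h 1 ν := memLp_one_iff_integrable.mpr hh
  set f₀ : Lp ℝ 1 ν := hmem.toLp h with hf₀
  have hFcont : Continuous fun p : E × E => p.2 + p.1 := continuous_snd.add continuous_fst
  set F : C(E × E, E) := ⟨fun p => p.2 + p.1, hFcont⟩ with hF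
  set g : E → C(E, E) := fun v => F.curry v with hg
  have hgm : ∀ v : E, MeasurePreserving (g v) ν ν := fun v =>
    measurePreserving_add_right ν v
  have hgcont : Continuous g := F.curry.continuous
  set T : E → Lp ℝ 1 ν := fun v => Lp.compMeasurePreserving (g v) (hgm v) f₀ with hT
  have hTcont : Continuous T :=
    Continuous.compMeasurePreservingLp continuous_const hgcont hgm one_ne_top
  have key : ∀ v : E, (∫⁻ x, ENNReal.ofReal |h (x + v) - h x| ∂ν) = edist (T v) (T 0) := by
    intro v
    have h1 : (T v : E → ℝ) =ᵐ[ν] fun x => h (x + v) := by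
      refine (Lp.coeFn_compMeasurePreserving f₀ (hgm v)).trans ?_
      exact (hgm v).quasiMeasurePreserving.ae_eq_comp hmem.coeFn_toLp
    have h0 : (T 0 : E → ℝ) =ᵐ[ν] fun x => h x := by
      refine ((Lp.coeFn_compMeasurePreserving f₀ (hgm 0)).trans ?_)
      refine ((hgm 0).quasiMeasurePreserving.ae_eq_comp hmem.coeFn_toLp).trans ?_
      filter_upwards with x
      simp [hg, hF]
    rw [Lp.edist_def]
    have hsub : ((T v : E → ℝ) - (T 0 : E → ℝ)) =ᵐ[ν] fun x => h (x + v) - h x := by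
      filter_upwards [h1, h0] with x h1x h0x
      simp [Pi.sub_apply, h1x, h0x]
    rw [eLpNorm_congr_ae hsub, eLpNorm_one_eq_lintegral_enorm]
    congr 1 with x
    rw [← Real.norm_eq_abs, ofReal_norm]
  simp only [key]
  have : Tendsto (fun v => edist (T v) (T 0)) (𝓝 0) (𝓝 (edist (T 0) (T 0))) :=
    (hTcont.tendsto 0).edist tendsto_const_nhds
  simpa using this

lemma dirBound (s : EuclideanSpace ℝ (Fin k) → ℝ) (hs : Measurable s)
    (H : EuclideanSpace ℝ (Fin k) → ℝ≥0∞) (hH : Measurable H)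
    (hHfin : ∫⁻ x, H x ∂volume ≠ ∞)
    (hkey : ∀ x v : EuclideanSpace ℝ (Fin k), ENNReal.ofReal ((s (x + v) - s x) ^ 2) ≤
      ENNReal.ofReal (‖v‖ ^ 2) * ∫⁻ t in Set.Icc (0:ℝ) 1, H (x + t • v))
    (A : Set (EuclideanSpace ℝ (Fin k))) (hA : MeasurableSet A)
    (e : EuclideanSpace ℝ (Fin k)) (he : ‖e‖ = 1) :
    ∫⁻ x in A, ENNReal.ofReal ((fderiv ℝ s x e) ^ 2) ∂volume ≤ ∫⁻ x in A, H x ∂volume := by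
  classical
  set tn : ℕ → ℝ := fun n => ((n : ℝ) + 1)⁻¹ with htn_def
  have htn_pos : ∀ n, 0 < tn n := fun n => by positivity
  set q : ℕ → EuclideanSpace ℝ (Fin k) → ℝ≥0∞ := fun n x =>
    ENNReal.ofReal ((((n : ℝ) + 1) * (s (x + tn n • e) - s x)) ^ 2) with hq_def
  -- pointwise liminf bound
  have hpt : ∀ x, ENNReal.ofReal ((fderiv ℝ s x e) ^ 2) ≤ atTop.liminf fun n => q n x := by
    intro x
    by_cases hdiff : DifferentiableAt ℝ s x
    · have hφ : HasDerivAt (fun t : ℝ => x + t • e) e 0 := by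
        simpa using ((hasDerivAt_id (0:ℝ)).smul_const e).const_add x
      have hline : HasDerivAt (fun t : ℝ => s (x + t • e)) (fderiv ℝ s x e) 0 := by
        have hfd : HasFDerivAt s (fderiv ℝ s x) (x + (0:ℝ) • e) := by
          simpa using hdiff.hasFDerivAt
        exact hfd.comp_hasDerivAt 0 hφ
      have hslope := hasDerivAt_iff_tendsto_slope.mp hline
      have htends : Tendsto tn atTop (𝓝[≠] (0:ℝ)) := by
        refine tendsto_nhdsWithin_of_tendsto_nhds_of_eventually_within _ ?_ ?_
        · have : Tendsto (fun n : ℕ => 1 / ((n : ℝ) + 1)) atTop (𝓝 0) :=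
            tendsto_one_div_add_atTop_nhds_zero_nat
          simpa [htn_def, one_div] using this
        · exact Eventually.of_forall fun n => (htn_pos n).ne'
      have hsl : Tendsto (fun n => slope (fun t : ℝ => s (x + t • e)) 0 (tn n)) atTop
          (𝓝 (fderiv ℝ s x e)) := hslope.comp htends
      have hsl' : Tendsto (fun n : ℕ => ((n : ℝ) + 1) * (s (x + tn n • e) - s x)) atTop
          (𝓝 (fderiv ℝ s x e)) := by
        refine hsl.congr fun n => ?_
        rw [slope_def_field]
        have h0 : s (x + (0:ℝ) • e) = s x := by simp
        simp only [h0, sub_zero, htn_def, div_inv_eq_mul]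
        ring
      have hsq : Tendsto (fun n => q n x) atTop
          (𝓝 (ENNReal.ofReal ((fderiv ℝ s x e) ^ 2))) := by
        exact (ENNReal.continuous_ofReal.tendsto _).comp ((hsl'.pow 2))
      exact hsq.liminf_eq.ge
    · rw [fderiv_zero_of_not_differentiableAt hdiff]
      simp
  -- Fatou
  have hqmeas : ∀ n, Measurable (q n) := by
    intro n
    apply ENNReal.measurable_ofReal.comp
    exact ((((hs.comp (measurable_add_const (tn n • e))).sub hs).const_mul _).pow_const 2)
  have fatou : ∫⁻ x in A, ENNReal.ofReal ((fderiv ℝ s x e) ^ 2) ∂volume ≤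
      atTop.liminf fun n => ∫⁻ x in A, q n x ∂volume := by
    calc ∫⁻ x in A, ENNReal.ofReal ((fderiv ℝ s x e) ^ 2) ∂volume
        ≤ ∫⁻ x in A, atTop.liminf (fun n => q n x) ∂volume := lintegral_mono hpt
      _ ≤ atTop.liminf fun n => ∫⁻ x in A, q n x ∂volume :=
          lintegral_liminf_le fun n => (hqmeas n)
  refine fatou.trans ?_
  -- ψ and its continuity
  set ψ : ℝ → ℝ≥0∞ := fun r => ∫⁻ x in A, H (x + r • e) ∂volume with hψ_def
  have hψ0 : ψ 0 = ∫⁻ x in A, H x ∂volume := by simp [hψ_def]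
  have hψ0_fin : ψ 0 < ∞ := by
    rw [hψ0]
    exact (setLIntegral_le_lintegral _ _).trans_lt hHfin.lt_top
  -- per-n bound
  have hbound : ∀ n, ∫⁻ x in A, q n x ∂volume ≤ ∫⁻ t in Set.Icc (0:ℝ) 1, ψ (t * tn n) := by
    intro n
    have hpt2 : ∀ x, q n x ≤ ∫⁻ t in Set.Icc (0:ℝ) 1, H (x + (t * tn n) • e) := by
      intro x
      have h1 : q n x = ENNReal.ofReal (((n : ℝ) + 1) ^ 2) *
          ENNReal.ofReal ((s (x + tn n • e) - s x) ^ 2) := by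
        simp only [hq_def]
        rw [mul_pow, ENNReal.ofReal_mul (by positivity)]
      have h2 := hkey x (tn n • e)
      have hnorm : ‖tn n • e‖ ^ 2 = tn n ^ 2 := by
        rw [norm_smul, he, Real.norm_eq_abs, abs_of_pos (htn_pos n)]
        ring
      rw [h1]
      calc ENNReal.ofReal (((n : ℝ) + 1) ^ 2) * ENNReal.ofReal ((s (x + tn n • e) - s x) ^ 2)
          ≤ ENNReal.ofReal (((n : ℝ) + 1) ^ 2) * (ENNReal.ofReal (tn n ^ 2) *
            ∫⁻ t in Set.Icc (0:ℝ) 1, H (x + t • (tn n • e))) := by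
            refine mul_le_mul_right ?_ _
            simpa [hnorm] using h2
        _ = (ENNReal.ofReal (((n : ℝ) + 1) ^ 2) * ENNReal.ofReal (tn n ^ 2)) *
            ∫⁻ t in Set.Icc (0:ℝ) 1, H (x + t • (tn n • e)) := by ring
        _ = ∫⁻ t in Set.Icc (0:ℝ) 1, H (x + (t * tn n) • e) := by
            rw [← ENNReal.ofReal_mul (by positivity)]
            have : ((n : ℝ) + 1) ^ 2 * tn n ^ 2 = 1 := by
              rw [htn_def]
              field_simp
            rw [this]
            simp [smul_smul]
    calc ∫⁻ x in A, q n x ∂volume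
        ≤ ∫⁻ x in A, ∫⁻ t in Set.Icc (0:ℝ) 1, H (x + (t * tn n) • e) ∂volume := lintegral_mono hpt2
      _ = ∫⁻ t in Set.Icc (0:ℝ) 1, ψ (t * tn n) := by
          rw [lintegral_lintegral_swap]
          exact (hH.comp (measurable_fst.add
            ((measurable_snd.mul_const (tn n)).smul_const e))).aemeasurable
  refine (liminf_le_liminf (Eventually.of_forall hbound)).trans ?_
  -- limit step
  refine ENNReal.le_of_forall_pos_le_add fun δ hδ hfin => ?_
  rw [← hψ0]
  have hcont : ∀ᶠ r in 𝓝 (0:ℝ), ψ r ≤ ψ 0 + δ := by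
    set hmap : EuclideanSpace ℝ (Fin k) → ℝ := fun x => (H x).toReal with hmap_def
    have hmap_meas : Measurable hmap := hH.ennreal_toReal
    have hmap_int : Integrable hmap volume :=
      integrable_toReal_of_lintegral_ne_top hH.aemeasurable hHfin
    have hae : ∀ᵐ x ∂(volume : Measure (EuclideanSpace ℝ (Fin k))),
        H x = ENNReal.ofReal (hmap x) :=
      (ae_lt_top hH hHfin).mono fun x hx => (ENNReal.ofReal_toReal hx.ne).symm
    have hre : Tendsto (fun r : ℝ => r • e) (𝓝 0) (𝓝 0) := by
      have : Continuous (fun r : ℝ => r • e) := continuous_id.smul continuous_const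
      simpa using this.tendsto 0
    have hcomp : Tendsto (fun r : ℝ =>
        ∫⁻ x, ENNReal.ofReal |hmap (x + r • e) - hmap x| ∂volume) (𝓝 0) (𝓝 0) :=
      (transCont hmap hmap_int).comp hre
    have hδ' : (0:ℝ≥0∞) < δ := by exact_mod_cast hδ
    filter_upwards [hcomp.eventually_lt_const hδ'] with r hr
    have h1 : volume {y : EuclideanSpace ℝ (Fin k) | ¬ (H y = ENNReal.ofReal (hmap y))} = 0 := by
      simpa [ae_iff] using hae
    have h2 : volume ((fun x => x + r • e) ⁻¹'
        {y : EuclideanSpace ℝ (Fin k) | ¬ (H y = ENNReal.ofReal (hmap y))}) = 0 :=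
      (measurePreserving_add_right volume (r • e)).quasiMeasurePreserving.preimage_null h1
    have haeshift : ∀ᵐ x ∂(volume : Measure (EuclideanSpace ℝ (Fin k))),
        H (x + r • e) = ENNReal.ofReal (hmap (x + r • e)) := by
      rw [ae_iff]
      exact h2
    calc ψ r = ∫⁻ x in A, ENNReal.ofReal (hmap (x + r • e)) ∂volume :=
          lintegral_congr_ae (ae_restrict_of_ae haeshift)
      _ ≤ ∫⁻ x in A, (ENNReal.ofReal (hmap x) +
            ENNReal.ofReal |hmap (x + r • e) - hmap x|) ∂volume := by
          refine lintegral_mono fun x => ?_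
          rw [← ENNReal.ofReal_add ENNReal.toReal_nonneg (abs_nonneg _)]
          refine ENNReal.ofReal_le_ofReal ?_
          have := le_abs_self (hmap (x + r • e) - hmap x)
          linarith
      _ = (∫⁻ x in A, ENNReal.ofReal (hmap x) ∂volume) +
            ∫⁻ x in A, ENNReal.ofReal |hmap (x + r • e) - hmap x| ∂volume :=
          lintegral_add_left (ENNReal.measurable_ofReal.comp hmap_meas) _
      _ ≤ ψ 0 + δ := by
          refine add_le_add ?_ ?_
          · rw [hψ0]
            exact (lintegral_congr_ae (ae_restrict_of_ae hae)).symm.le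
          · exact (setLIntegral_le_lintegral _ _).trans hr.le
  obtain ⟨r₀, hr₀pos, hr₀⟩ := Metric.eventually_nhds_iff.mp hcont
  have hev : ∀ᶠ n in atTop, ∫⁻ t in Set.Icc (0:ℝ) 1, ψ (t * tn n) ≤ ψ 0 + δ := by
    have htn0 : Tendsto tn atTop (𝓝 0) := by
      have : Tendsto (fun n : ℕ => 1 / ((n : ℝ) + 1)) atTop (𝓝 0) :=
        tendsto_one_div_add_atTop_nhds_zero_nat
      simpa [htn_def, one_div] using this
    filter_upwards [htn0.eventually (eventually_abs_sub_lt 0 hr₀pos)] with n hn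
    have hptw : ∀ t ∈ Set.Icc (0:ℝ) 1, ψ (t * tn n) ≤ ψ 0 + δ := by
      intro t ht
      apply hr₀
      rw [Real.dist_eq, sub_zero]
      have h1 : |t * tn n| ≤ |tn n| := by
        rw [abs_mul]
        calc |t| * |tn n| ≤ 1 * |tn n| :=
          mul_le_mul_of_nonneg_right (abs_le.mpr ⟨by linarith [ht.1], ht.2⟩) (abs_nonneg _)
        _ = |tn n| := one_mul _
      calc |t * tn n| ≤ |tn n| := h1
        _ < r₀ := by simpa [Real.dist_eq] using hn
    calc ∫⁻ t in Set.Icc (0:ℝ) 1, ψ (t * tn n)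
        ≤ ∫⁻ _ in Set.Icc (0:ℝ) 1, (ψ 0 + δ) := by
          refine lintegral_mono_ae ?_
          filter_upwards [ae_restrict_mem measurableSet_Icc] with t ht
          exact hptw t ht
      _ = ψ 0 + δ := by
          rw [lintegral_const, Measure.restrict_apply_univ, Real.volume_Icc]
          simp
  exact le_trans liminf_le_limsup (limsup_le_of_le (by isBoundedDefault) hev)

lemma coreBound (s : EuclideanSpace ℝ (Fin k) → ℝ) (hs : Measurable s)
    (H : EuclideanSpace ℝ (Fin k) → ℝ≥0∞) (hH : Measurable H)
    (hHfin : ∫⁻ x, H x ∂volume ≠ ∞)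
    (hkey : ∀ x v : EuclideanSpace ℝ (Fin k), ENNReal.ofReal ((s (x + v) - s x) ^ 2) ≤
      ENNReal.ofReal (‖v‖ ^ 2) * ∫⁻ t in Set.Icc (0:ℝ) 1, H (x + t • v)) :
    ∫⁻ x, ENNReal.ofReal (‖fderiv ℝ s x‖ ^ 2) ∂volume ≤ ∫⁻ x, H x ∂volume := by
  classical
  borelize (EuclideanSpace ℝ (Fin k) →L[ℝ] ℝ)
  by_cases htriv : ∀ x, fderiv ℝ s x = 0
  · simp only [htriv]
    simp
  push_neg at htriv
  obtain ⟨x₀, hx₀⟩ := htriv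
  haveI : Nontrivial (EuclideanSpace ℝ (Fin k)) := by
    obtain ⟨v, hv⟩ : ∃ v, fderiv ℝ s x₀ v ≠ 0 := by
      by_contra hcon
      push_neg at hcon
      exact hx₀ (ContinuousLinearMap.ext fun v => by simpa using hcon v)
    have hvne : v ≠ 0 := by
      rintro rfl
      simp at hv
    exact nontrivial_of_ne v 0 hvne
  -- countable dense subset of the unit sphere
  set S : Set (EuclideanSpace ℝ (Fin k)) := Metric.sphere 0 1 with hS_def
  haveI : Nonempty S := by
    obtain ⟨w, hw⟩ := exists_norm_eq (EuclideanSpace ℝ (Fin k)) (zero_le_one (α := ℝ))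
    exact ⟨⟨w, by simpa [hS_def, mem_sphere_iff_norm] using hw⟩⟩
  obtain ⟨c, hc_count, hc_dense⟩ := TopologicalSpace.exists_countable_dense S
  obtain ⟨f, hf_range⟩ := Set.Countable.exists_eq_range hc_count hc_dense.nonempty
  set T : ℕ → EuclideanSpace ℝ (Fin k) := fun n => (f n : EuclideanSpace ℝ (Fin k)) with hT_def
  have hT_norm : ∀ n, ‖T n‖ = 1 := by
    intro n
    have h2 : (f n : EuclideanSpace ℝ (Fin k)) ∈ Metric.sphere
        (0 : EuclideanSpace ℝ (Fin k)) 1 := (f n).2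
    rwa [mem_sphere_zero_iff_norm] at h2
  have hT_dense : ∀ v : EuclideanSpace ℝ (Fin k), ‖v‖ = 1 → ∀ ε : ℝ, 0 < ε →
      ∃ n, ‖T n - v‖ < ε := by
    intro v hv ε hε
    have hvS : v ∈ S := by simpa [hS_def, mem_sphere_iff_norm] using hv
    have := hc_dense ⟨v, hvS⟩
    rw [Metric.mem_closure_iff] at this
    obtain ⟨b, hb, hdist⟩ := this ε hε
    rw [hf_range] at hb
    obtain ⟨n, rfl⟩ := hb
    refine ⟨n, ?_⟩
    have : dist v (T n) < ε := by simpa [Subtype.dist_eq, hT_def] using hdist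
    rwa [dist_comm, dist_eq_norm] at this
  -- main estimate for each ε
  have hmain : ∀ ε : ℝ, 0 < ε → ε < 1 →
      ∫⁻ x, ENNReal.ofReal (‖fderiv ℝ s x‖ ^ 2) ∂volume ≤
        ENNReal.ofReal (((1 - ε)⁻¹) ^ 2) * ∫⁻ x, H x ∂volume := by
    intro ε hε hε1
    set L : EuclideanSpace ℝ (Fin k) → (EuclideanSpace ℝ (Fin k) →L[ℝ] ℝ) :=
      fun x => fderiv ℝ s x with hL_def
    have hLmeas : Measurable L := measurable_fderiv ℝ s
    set P : ℕ → EuclideanSpace ℝ (Fin k) → Prop :=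
      fun n x => (1 - ε) * ‖L x‖ ≤ L x (T n) with hP_def
    have hPmeas : ∀ n, MeasurableSet {x | P n x} := by
      intro n
      exact measurableSet_le ((hLmeas.norm).const_mul _) (measurable_fderiv_apply_const ℝ s (T n))
    have hcover : ∀ x, ∃ n, P n x := by
      intro x
      by_cases hx : L x = 0
      · exact ⟨0, by simp [hP_def, hx]⟩
      · have hLpos : 0 < ‖L x‖ := norm_pos_iff.mpr hx
        have hr : (1 - ε / 2) * ‖L x‖ < ‖L x‖ := by nlinarith
        obtain ⟨w, hw1, hw2⟩ := (L x).exists_lt_apply_of_lt_opNorm hr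
        have hrpos : 0 < (1 - ε / 2) * ‖L x‖ := by nlinarith
        have hwne : w ≠ 0 := by
          rintro rfl
          simp only [map_zero, norm_zero] at hw2
          linarith
        set v₀ : EuclideanSpace ℝ (Fin k) := if 0 ≤ L x w then w else -w with hv₀_def
        have hv₀norm : ‖v₀‖ = ‖w‖ := by
          rw [hv₀_def]; split <;> simp
        have hv₀ : (1 - ε / 2) * ‖L x‖ < L x v₀ := by
          rw [hv₀_def]
          split
          · rwa [Real.norm_eq_abs, abs_of_nonneg (by assumption)] at hw2
          · rw [map_neg]
            rw [Real.norm_eq_abs, abs_of_neg (by linarith [not_le.mp (by assumption)])] at hw2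
            linarith [hw2]
        set v : EuclideanSpace ℝ (Fin k) := ‖v₀‖⁻¹ • v₀ with hv_def
        have hv₀pos : 0 < ‖v₀‖ := by rw [hv₀norm]; exact norm_pos_iff.mpr hwne
        have hvnorm : ‖v‖ = 1 := by
          rw [hv_def, norm_smul, Real.norm_eq_abs, abs_of_pos (inv_pos.mpr hv₀pos)]
          field_simp
        have hvval : (1 - ε / 2) * ‖L x‖ < L x v := by
          rw [hv_def, (L x).map_smul, smul_eq_mul]
          have h1 : ‖v₀‖⁻¹ ≥ 1 := by
            rw [ge_iff_le, le_inv_comm₀ one_pos hv₀pos]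
            simpa [hv₀norm] using hw1.le
          calc (1 - ε / 2) * ‖L x‖ < L x v₀ := hv₀
            _ ≤ ‖v₀‖⁻¹ * L x v₀ := le_mul_of_one_le_left (by linarith [hv₀, hrpos]) h1
        obtain ⟨n, hn⟩ := hT_dense v hvnorm (ε / 2) (by linarith)
        refine ⟨n, ?_⟩
        rw [hP_def]
        have hest : |L x (T n) - L x v| ≤ ‖L x‖ * (ε / 2) := by
          rw [← map_sub]
          calc |L x (T n - v)| = ‖L x (T n - v)‖ := (Real.norm_eq_abs _).symm
            _ ≤ ‖L x‖ * ‖T n - v‖ := (L x).le_opNorm _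
            _ ≤ ‖L x‖ * (ε / 2) := by
                exact mul_le_mul_of_nonneg_left hn.le (norm_nonneg _)
        have := abs_le.mp hest
        nlinarith [this.1, hvval]
    -- the partition
    set A : ℕ → Set (EuclideanSpace ℝ (Fin k)) :=
      fun n => {x | P n x} ∩ ⋂ (j : ℕ) (_ : j < n), {x | P j x}ᶜ with hA_def
    have hAmeas : ∀ n, MeasurableSet (A n) := fun n =>
      (hPmeas n).inter (MeasurableSet.iInter fun j => MeasurableSet.iInter fun _ =>
        (hPmeas j).compl)
    have hAdisj : Pairwise (Function.onFun Disjoint A) := by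
      intro i j hij
      simp only [Function.onFun]
      wlog hlt : i < j generalizing i j
      · exact (this hij.symm (by omega)).symm
      rw [Set.disjoint_left]
      rintro x ⟨hxi, -⟩ ⟨-, hxj⟩
      simp only [Set.mem_iInter, Set.mem_compl_iff, Set.mem_setOf_eq] at hxj
      exact hxj i hlt hxi
    have hAuniv : (⋃ n, A n) = Set.univ := by
      rw [Set.eq_univ_iff_forall]
      intro x
      obtain ⟨n, hn⟩ := hcover x
      have hex : ∃ n, P n x := ⟨n, hn⟩
      refine Set.mem_iUnion.mpr ⟨Nat.find hex, ?_⟩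
      refine ⟨Nat.find_spec hex, ?_⟩
      simp only [Set.mem_iInter, Set.mem_compl_iff, Set.mem_setOf_eq]
      intro j hj
      exact Nat.find_min hex hj
    -- split LHS, estimate each piece
    have hsplit : ∫⁻ x, ENNReal.ofReal (‖L x‖ ^ 2) ∂volume =
        ∑' n, ∫⁻ x in A n, ENNReal.ofReal (‖L x‖ ^ 2) ∂volume := by
      rw [← lintegral_iUnion hAmeas hAdisj, hAuniv, Measure.restrict_univ]
    have hsplitH : ∫⁻ x, H x ∂volume = ∑' n, ∫⁻ x in A n, H x ∂volume := by
      rw [← lintegral_iUnion hAmeas hAdisj, hAuniv, Measure.restrict_univ]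
    rw [hsplit, hsplitH, ← ENNReal.tsum_mul_left]
    refine ENNReal.tsum_le_tsum fun n => ?_
    have hstep1 : ∫⁻ x in A n, ENNReal.ofReal (‖L x‖ ^ 2) ∂volume ≤
        ENNReal.ofReal (((1 - ε)⁻¹) ^ 2) *
          ∫⁻ x in A n, ENNReal.ofReal ((L x (T n)) ^ 2) ∂volume := by
      rw [← lintegral_const_mul _
        (((measurable_fderiv_apply_const ℝ s (T n)).pow_const 2).ennreal_ofReal)]
      refine lintegral_mono_ae ?_
      filter_upwards [ae_restrict_mem (hAmeas n)] with x hx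
      have hPx : P n x := hx.1
      rw [hP_def] at hPx
      have h1ε : (0:ℝ) < 1 - ε := by linarith
      have hnn : 0 ≤ L x (T n) := le_trans (by positivity) hPx
      have hb : ‖L x‖ ≤ (1 - ε)⁻¹ * L x (T n) := by
        calc ‖L x‖ = (1 - ε) * ‖L x‖ / (1 - ε) := by field_simp
          _ ≤ L x (T n) / (1 - ε) := by
              gcongr
          _ = (1 - ε)⁻¹ * L x (T n) := by ring
      calc ENNReal.ofReal (‖L x‖ ^ 2) ≤ ENNReal.ofReal (((1 - ε)⁻¹ * L x (T n)) ^ 2) := by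
            apply ENNReal.ofReal_le_ofReal
            exact pow_le_pow_left₀ (norm_nonneg _) hb 2
        _ = ENNReal.ofReal (((1 - ε)⁻¹) ^ 2) * ENNReal.ofReal ((L x (T n)) ^ 2) := by
            rw [mul_pow, ENNReal.ofReal_mul (by positivity)]
    refine hstep1.trans (mul_le_mul_right ?_ _)
    exact dirBound s hs H hH hHfin hkey (A n) (hAmeas n) (T n) (hT_norm n)
  -- pass to the limit ε → 0
  set I : ℝ≥0∞ := ∫⁻ x, H x ∂volume with hI_def
  have hseq : Tendsto (fun j : ℕ => ENNReal.ofReal (((1 - ((j:ℝ)+2)⁻¹)⁻¹) ^ 2) * I)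
      atTop (𝓝 I) := by
    have h1 : Tendsto (fun j : ℕ => ((j:ℝ)+2)⁻¹) atTop (𝓝 0) := by
      apply tendsto_inv_atTop_zero.comp
      exact tendsto_atTop_add_const_right _ 2 tendsto_natCast_atTop_atTop
    have h2 : Tendsto (fun j : ℕ => ENNReal.ofReal (((1 - ((j:ℝ)+2)⁻¹)⁻¹) ^ 2)) atTop
        (𝓝 1) := by
      have hreal : Tendsto (fun j : ℕ => ((1 - ((j:ℝ)+2)⁻¹)⁻¹) ^ 2) atTop (𝓝 1) := by
        have := ((h1.const_sub 1).inv₀ (by norm_num)).pow 2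
        simpa using this
      have := (ENNReal.continuous_ofReal.tendsto 1).comp hreal
      rw [ENNReal.ofReal_one] at this
      exact this
    have := ENNReal.Tendsto.mul_const (b := I) h2 (Or.inl one_ne_zero)
    simpa using this
  refine ge_of_tendsto' hseq fun j => ?_
  exact hmain ((j:ℝ)+2)⁻¹ (by positivity) (by
    rw [inv_lt_one_iff₀]
    right
    linarith [Nat.cast_nonneg (α := ℝ) j])

lemma absDiffToRealLe {a b c : ℝ≥0∞} (h1 : a ≤ b + c) (h2 : b ≤ a + c) :
    ENNReal.ofReal ((a.toReal - b.toReal) ^ 2) ≤ c ^ 2 := by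
  by_cases hc : c = ∞
  · simp [hc, pow_two]
  by_cases ha : a = ∞
  · have hb : b = ∞ := by
      by_contra hb
      rw [ha] at h1
      exact (lt_of_le_of_lt h1 (ENNReal.add_lt_top.mpr ⟨Ne.lt_top hb, Ne.lt_top hc⟩)).ne rfl
    simp [ha, hb]
  by_cases hb : b = ∞
  · have ha' : a = ∞ := by
      by_contra ha'
      rw [hb] at h2
      exact (lt_of_le_of_lt h2 (ENNReal.add_lt_top.mpr ⟨Ne.lt_top ha', Ne.lt_top hc⟩)).ne rfl
    exact absurd ha' ha
  have h1' : a.toReal ≤ b.toReal + c.toReal := by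
    rw [← ENNReal.toReal_add hb hc]
    exact ENNReal.toReal_mono (by finiteness) h1
  have h2' : b.toReal ≤ a.toReal + c.toReal := by
    rw [← ENNReal.toReal_add ha hc]
    exact ENNReal.toReal_mono (by finiteness) h2
  have habs : |a.toReal - b.toReal| ≤ c.toReal := abs_sub_le_iff.mpr ⟨by linarith, by linarith⟩
  calc ENNReal.ofReal ((a.toReal - b.toReal) ^ 2)
      = ENNReal.ofReal (|a.toReal - b.toReal| ^ 2) := by rw [sq_abs]
    _ ≤ ENNReal.ofReal (c.toReal ^ 2) := by
        apply ENNReal.ofReal_le_ofReal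
        exact pow_le_pow_left₀ (abs_nonneg _) habs 2
    _ = (ENNReal.ofReal c.toReal) ^ 2 := ENNReal.ofReal_pow ENNReal.toReal_nonneg 2
    _ = c ^ 2 := by rw [ENNReal.ofReal_toReal hc]

lemma sqLintegralLe (μ : Measure ℝ) [IsProbabilityMeasure μ] (f : ℝ → ℝ≥0∞)
    (hf : AEMeasurable f μ) : (∫⁻ t, f t ∂μ) ^ 2 ≤ ∫⁻ t, (f t) ^ 2 ∂μ := by
  have hpq : (2:ℝ).HolderConjugate 2 := Real.HolderConjugate.two_two
  have hH := ENNReal.lintegral_mul_le_Lp_mul_Lq μ hpq hf aemeasurable_const (g := fun _ => 1)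
  simp only [mul_one, ENNReal.one_rpow, lintegral_one, measure_univ, Pi.mul_apply] at hH
  have hH2 : ∫⁻ t, f t ∂μ ≤ (∫⁻ t, f t ^ (2:ℝ) ∂μ) ^ (1/(2:ℝ)) := by
    simpa using hH
  calc (∫⁻ t, f t ∂μ) ^ 2 ≤ ((∫⁻ t, f t ^ (2:ℝ) ∂μ) ^ (1/(2:ℝ))) ^ 2 := by
        exact pow_le_pow_left' hH2 2
    _ = ∫⁻ t, f t ^ (2:ℝ) ∂μ := by
        rw [← ENNReal.rpow_natCast (((∫⁻ t, f t ^ (2:ℝ) ∂μ) ^ (1/(2:ℝ)))) 2,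
          ← ENNReal.rpow_mul]
        norm_num
    _ = ∫⁻ t, f t ^ 2 ∂μ := by
        congr 1 with t
        rw [← ENNReal.rpow_natCast (f t) 2]
        norm_num

lemma eLpNormTwoSq {α : Type*} [MeasurableSpace α] (μ : Measure α) (f : α → ℂ) :
    (eLpNorm f 2 μ) ^ 2 = ∫⁻ y, (‖f y‖₊ : ℝ≥0∞) ^ 2 ∂μ := by
  rw [eLpNorm_eq_lintegral_rpow_enorm_toReal (by norm_num) (by norm_num)]
  simp only [enorm_eq_nnnorm]
  have hinner : ∀ y, (‖f y‖₊ : ℝ≥0∞) ^ ((2:ℝ≥0∞).toReal) = (‖f y‖₊ : ℝ≥0∞) ^ (2:ℕ) := fun y => by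
    rw [ENNReal.toReal_ofNat, ← ENNReal.rpow_natCast]
    norm_num
  simp_rw [hinner]
  rw [← ENNReal.rpow_natCast ((∫⁻ y, (‖f y‖₊ : ℝ≥0∞) ^ (2:ℕ) ∂μ) ^ (1 / (2:ℝ≥0∞).toReal)) 2,
    ← ENNReal.rpow_mul]
  norm_num

/-- Hoffmann-Ostenhof inequality: if `u ∈ H¹(ℝⁿ)` (here `ℝⁿ = ℝᵏ × ℝᵐ`) and
`μ_k(x) = ∫_{ℝᵐ} |u(x,y)|² dy`, then `√μ_k ∈ H¹(ℝᵏ)` and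
`∫ |∇√μ_k|² ≤ ∫∫ |∇_x u(x,y)|² dx dy`. -/
theorem hoffmann_ostenhof (k m : ℕ)
    (u : EuclideanSpace ℝ (Fin k) × EuclideanSpace ℝ (Fin m) → ℂ)
    (hu : ContDiff ℝ 1 u)
    (huL2 : MemLp u 2 volume)
    (hgrad : Integrable
      (fun p : EuclideanSpace ℝ (Fin k) × EuclideanSpace ℝ (Fin m) =>
        ‖fderiv ℝ (fun x => u (x, p.2)) p.1‖ ^ 2))
    (μk : EuclideanSpace ℝ (Fin k) → ℝ)
    (hμk : ∀ x, μk x = ∫ y, ‖u (x, y)‖ ^ 2) :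
    MemLp (fun x => Real.sqrt (μk x)) 2 volume ∧
      Integrable (fun x => ‖fderiv ℝ (fun x' => Real.sqrt (μk x')) x‖ ^ 2) ∧
      ∫ x, ‖fderiv ℝ (fun x' => Real.sqrt (μk x')) x‖ ^ 2 ≤
        ∫ p : EuclideanSpace ℝ (Fin k) × EuclideanSpace ℝ (Fin m),
          ‖fderiv ℝ (fun x => u (x, p.2)) p.1‖ ^ 2 := by
  classical
  set D : (EuclideanSpace ℝ (Fin k) × EuclideanSpace ℝ (Fin m)) →
      (EuclideanSpace ℝ (Fin k) →L[ℝ] ℂ) :=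
    fun p => fderiv ℝ (fun x => u (x, p.2)) p.1 with hD_def
  have hu_diff : Differentiable ℝ u := hu.differentiable one_ne_zero
  have hu_cont : Continuous u := hu.continuous
  have hpartial_diff : ∀ (y : EuclideanSpace ℝ (Fin m)) (z : EuclideanSpace ℝ (Fin k)),
      DifferentiableAt ℝ (fun z' => u (z', y)) z := fun y z =>
    (hu_diff (z, y)).comp z (differentiableAt_id.prodMk (differentiableAt_const y))
  have hD_eq : ∀ p, D p = (fderiv ℝ u p).comp
      (ContinuousLinearMap.inl ℝ (EuclideanSpace ℝ (Fin k)) (EuclideanSpace ℝ (Fin m))) := by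
    intro p
    have h2 := ((hu_diff p).hasFDerivAt.comp p.1 (hasFDerivAt_prodMk_left (𝕜 := ℝ) p.1 p.2))
    have h3 : HasFDerivAt (fun x => u (x, p.2)) ((fderiv ℝ u p).comp
        (ContinuousLinearMap.inl ℝ (EuclideanSpace ℝ (Fin k)) (EuclideanSpace ℝ (Fin m)))) p.1 := by
      exact h2
    exact h3.fderiv
  have hD_cont : Continuous D := by
    have h1 : Continuous fun p : EuclideanSpace ℝ (Fin k) × EuclideanSpace ℝ (Fin m) =>
        (fderiv ℝ u p).comp
          (ContinuousLinearMap.inl ℝ (EuclideanSpace ℝ (Fin k)) (EuclideanSpace ℝ (Fin m))) :=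
      (hu.continuous_fderiv one_ne_zero).clm_comp continuous_const
    exact h1.congr fun p => (hD_eq p).symm
  set H : EuclideanSpace ℝ (Fin k) → ℝ≥0∞ :=
    fun x => ∫⁻ y, (‖D (x, y)‖₊ : ℝ≥0∞) ^ 2 with hH_def
  have hDsq_meas : Measurable fun p : EuclideanSpace ℝ (Fin k) × EuclideanSpace ℝ (Fin m) =>
      (‖D p‖₊ : ℝ≥0∞) ^ 2 := ((hD_cont.nnnorm.measurable).coe_nnreal_ennreal).pow_const 2
  have hH_meas : Measurable H := hDsq_meas.lintegral_prod_right'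
  have hIeq : ∫⁻ p, (‖D p‖₊ : ℝ≥0∞) ^ 2 ∂volume = ∫⁻ x, H x ∂volume := by
    rw [Measure.volume_eq_prod, lintegral_prod _ hDsq_meas.aemeasurable]
  have hDnn : ∀ p, ((‖D p‖₊ : ℝ≥0∞)) ^ 2 = ENNReal.ofReal (‖D p‖ ^ 2) := fun p => by
    rw [ENNReal.ofReal_pow (norm_nonneg _), ofReal_norm, enorm_eq_nnnorm]
  have hIof : ∫⁻ p, (‖D p‖₊ : ℝ≥0∞) ^ 2 ∂volume = ENNReal.ofReal (∫ p, ‖D p‖ ^ 2) := by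
    rw [ofReal_integral_eq_lintegral_ofReal hgrad
      (Eventually.of_forall fun p => by positivity)]
    simp_rw [hDnn]
    rfl
  have hHfin : ∫⁻ x, H x ∂volume ≠ ∞ := by
    rw [← hIeq, hIof]; exact ENNReal.ofReal_ne_top
  -- the density N
  set N : EuclideanSpace ℝ (Fin k) → ℝ≥0∞ :=
    fun x => ∫⁻ y, (‖u (x, y)‖₊ : ℝ≥0∞) ^ 2 with hN_def
  have husq_meas : Measurable fun p : EuclideanSpace ℝ (Fin k) × EuclideanSpace ℝ (Fin m) =>
      (‖u p‖₊ : ℝ≥0∞) ^ 2 := ((hu_cont.nnnorm.measurable).coe_nnreal_ennreal).pow_const 2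
  have hN_meas : Measurable N := husq_meas.lintegral_prod_right'
  have hμkN : ∀ x, μk x = (N x).toReal := by
    intro x
    rw [hμk x]
    have hcy : Continuous fun y => ‖u (x, y)‖ ^ 2 :=
      ((hu_cont.comp (Continuous.prodMk_right x)).norm).pow 2
    rw [integral_eq_lintegral_of_nonneg_ae (Eventually.of_forall fun y => by positivity)
      hcy.aestronglyMeasurable]
    congr 1
    refine lintegral_congr fun y => ?_
    rw [ENNReal.ofReal_pow (norm_nonneg _), ofReal_norm, enorm_eq_nnnorm]
  have hsqrt_eq : ∀ x, Real.sqrt (μk x) =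
      (eLpNorm (fun y => u (x, y)) 2 volume).toReal := by
    intro x
    have h1 : (eLpNorm (fun y => u (x, y)) 2 volume) ^ 2 = N x := eLpNormTwoSq _ _
    have h2 : (N x).toReal = ((eLpNorm (fun y => u (x, y)) 2 volume).toReal) ^ 2 := by
      rw [← h1, ENNReal.toReal_pow]
    rw [hμkN x, h2, Real.sqrt_sq ENNReal.toReal_nonneg]
  -- measurability
  have hμk_meas : Measurable μk := by
    have : μk = fun x => (N x).toReal := funext hμkN
    rw [this]; exact hN_meas.ennreal_toReal
  have hs_meas : Measurable (fun x' => Real.sqrt (μk x')) :=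
    Real.continuous_sqrt.measurable.comp hμk_meas
  -- Part 1 : Memℒp
  have hNtot : ∫⁻ x, N x ∂volume < ∞ := by
    have h1 : ∫⁻ x, N x ∂volume = ∫⁻ p, (‖u p‖₊ : ℝ≥0∞) ^ 2 ∂volume := by
      rw [Measure.volume_eq_prod, lintegral_prod _ husq_meas.aemeasurable]
    have h2 : (eLpNorm u 2 volume) ^ 2 = ∫⁻ p, (‖u p‖₊ : ℝ≥0∞) ^ 2 ∂volume :=
      eLpNormTwoSq _ _
    rw [h1, ← h2]
    exact ENNReal.pow_lt_top huL2.2.lt_top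
  have hmem : MemLp (fun x => Real.sqrt (μk x)) 2 volume := by
    refine ⟨hs_meas.aestronglyMeasurable, ?_⟩
    rw [eLpNorm_eq_lintegral_rpow_enorm_toReal (by norm_num) (by norm_num)]
    refine ENNReal.rpow_lt_top_of_nonneg (by norm_num) ?_
    have hb : ∀ x, (‖Real.sqrt (μk x)‖₊ : ℝ≥0∞) ^ ((2 : ℝ≥0∞).toReal) ≤ N x := by
      intro x
      have h0 : ((‖Real.sqrt (μk x)‖₊ : ℝ≥0∞)) ^ ((2 : ℝ≥0∞).toReal) =
          ENNReal.ofReal ((N x).toReal) := by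
        rw [ENNReal.toReal_ofNat, show ((2:ℝ)) = ((2:ℕ):ℝ) by norm_num,
          ENNReal.rpow_natCast, ← enorm_eq_nnnorm, ← ofReal_norm,
          ← ENNReal.ofReal_pow (norm_nonneg _), Real.norm_eq_abs, sq_abs,
          Real.sq_sqrt (hμkN x ▸ ENNReal.toReal_nonneg), hμkN x]
      rw [h0]
      exact ENNReal.ofReal_toReal_le
    exact ne_of_lt (lt_of_le_of_lt (lintegral_mono hb) hNtot)
  -- key pointwise hypothesis
  have hkey : ∀ x v : EuclideanSpace ℝ (Fin k),
      ENNReal.ofReal ((Real.sqrt (μk (x + v)) - Real.sqrt (μk x)) ^ 2) ≤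
        ENNReal.ofReal (‖v‖ ^ 2) * ∫⁻ t in Set.Icc (0:ℝ) 1, H (x + t • v) := by
    intro x v
    -- reverse triangle inequality in L²(dy)
    set F1 : EuclideanSpace ℝ (Fin m) → ℂ := fun y => u (x + v, y) with hF1
    set F0 : EuclideanSpace ℝ (Fin m) → ℂ := fun y => u (x, y) with hF0
    set Fd : EuclideanSpace ℝ (Fin m) → ℂ := fun y => u (x + v, y) - u (x, y) with hFd
    have hF1m : AEStronglyMeasurable F1 volume :=
      (hu_cont.comp (Continuous.prodMk_right (x + v))).aestronglyMeasurable
    have hF0m : AEStronglyMeasurable F0 volume :=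
      (hu_cont.comp (Continuous.prodMk_right x)).aestronglyMeasurable
    have hFdm : AEStronglyMeasurable Fd volume :=
      ((hu_cont.comp (Continuous.prodMk_right (x + v))).sub
        (hu_cont.comp (Continuous.prodMk_right x))).aestronglyMeasurable
    have ha : eLpNorm F1 2 volume ≤ eLpNorm F0 2 volume + eLpNorm Fd 2 volume := by
      have heq : F1 = F0 + Fd := funext fun y => by simp [hF1, hF0, hFd]
      rw [heq]
      exact eLpNorm_add_le hF0m hFdm one_le_two
    have hb : eLpNorm F0 2 volume ≤ eLpNorm F1 2 volume + eLpNorm Fd 2 volume := by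
      have heq : F0 = F1 + (-Fd) := funext fun y => by simp [hF1, hF0, hFd]
      rw [heq]
      have := eLpNorm_add_le hF1m hFdm.neg one_le_two
      rwa [eLpNorm_neg] at this
    have habs := absDiffToRealLe ha hb
    have hL : ENNReal.ofReal ((Real.sqrt (μk (x + v)) - Real.sqrt (μk x)) ^ 2) ≤
        (eLpNorm Fd 2 volume) ^ 2 := by
      rw [hsqrt_eq (x + v), hsqrt_eq x]
      exact habs
    refine hL.trans ?_
    rw [eLpNormTwoSq]
    -- FTC pointwise bound
    have hC : ∀ y, (‖Fd y‖₊ : ℝ≥0∞) ^ 2 ≤ ENNReal.ofReal (‖v‖ ^ 2) *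
        ∫⁻ t in Set.Icc (0:ℝ) 1, (‖D (x + t • v, y)‖₊ : ℝ≥0∞) ^ 2 := by
      intro y
      have hg : ∀ t : ℝ, HasDerivAt (fun t : ℝ => u (x + t • v, y)) (D (x + t • v, y) v) t := by
        intro t
        have hφ : HasDerivAt (fun t : ℝ => x + t • v) v t := by
          simpa using ((hasDerivAt_id t).smul_const v).const_add x
        have hfd : HasFDerivAt (fun z => u (z, y)) (D (x + t • v, y)) (x + t • v) :=
          (hpartial_diff y (x + t • v)).hasFDerivAt
        exact hfd.comp_hasDerivAt t hφ
      have hDcont_t : Continuous fun t : ℝ => D (x + t • v, y) := by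
        apply hD_cont.comp
        exact (continuous_const.add (continuous_id.smul continuous_const)).prodMk
          continuous_const
      have hInt : IntervalIntegrable (fun t : ℝ => D (x + t • v, y) v) volume 0 1 :=
        (hDcont_t.clm_apply continuous_const).intervalIntegrable 0 1
      have heq : ∫ t in (0:ℝ)..1, D (x + t • v, y) v = u (x + v, y) - u (x, y) := by
        rw [intervalIntegral.integral_eq_sub_of_hasDerivAt (fun t _ => hg t) hInt]
        simp
      have hnorm : ‖Fd y‖ ≤ (∫ t in (0:ℝ)..1, ‖D (x + t • v, y)‖) * ‖v‖ := by
        have hFdy : Fd y = u (x + v, y) - u (x, y) := rfl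
        rw [hFdy, ← heq]
        calc ‖∫ t in (0:ℝ)..1, D (x + t • v, y) v‖
            ≤ ∫ t in (0:ℝ)..1, ‖D (x + t • v, y) v‖ :=
              intervalIntegral.norm_integral_le_integral_norm zero_le_one
          _ ≤ ∫ t in (0:ℝ)..1, ‖D (x + t • v, y)‖ * ‖v‖ := by
              apply intervalIntegral.integral_mono_on zero_le_one
              · exact ((hDcont_t.clm_apply continuous_const).norm).intervalIntegrable 0 1
              · exact (hDcont_t.norm.mul continuous_const).intervalIntegrable 0 1
              · exact fun t _ => (D (x + t • v, y)).le_opNorm v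
          _ = (∫ t in (0:ℝ)..1, ‖D (x + t • v, y)‖) * ‖v‖ := by
              rw [intervalIntegral.integral_mul_const]
      set R : ℝ := ∫ t in (0:ℝ)..1, ‖D (x + t • v, y)‖ with hR
      have hRnn : 0 ≤ R := by
        rw [hR]
        apply intervalIntegral.integral_nonneg zero_le_one
        exact fun t _ => norm_nonneg _
      have h1 : (‖Fd y‖₊ : ℝ≥0∞) ^ 2 ≤ ENNReal.ofReal (‖v‖ ^ 2) * ENNReal.ofReal (R ^ 2) := by
        rw [← enorm_eq_nnnorm, ← ofReal_norm, ← ENNReal.ofReal_pow (norm_nonneg _),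
          ← ENNReal.ofReal_mul (by positivity)]
        apply ENNReal.ofReal_le_ofReal
        calc ‖Fd y‖ ^ 2 ≤ (R * ‖v‖) ^ 2 := by
              apply pow_le_pow_left₀ (norm_nonneg _) hnorm
          _ = ‖v‖ ^ 2 * R ^ 2 := by ring
      refine h1.trans (mul_le_mul_right ?_ _)
      -- Cauchy–Schwarz step
      haveI : IsProbabilityMeasure (volume.restrict (Set.Icc (0:ℝ) 1)) := by
        constructor
        rw [Measure.restrict_apply_univ, Real.volume_Icc]
        norm_num
      have hRl : ENNReal.ofReal R = ∫⁻ t in Set.Icc (0:ℝ) 1, (‖D (x + t • v, y)‖₊ : ℝ≥0∞) := by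
        rw [hR, intervalIntegral.integral_of_le zero_le_one, ← integral_Icc_eq_integral_Ioc]
        rw [ofReal_integral_eq_lintegral_ofReal
          (hDcont_t.norm.integrableOn_Icc)
          (Eventually.of_forall fun t => norm_nonneg _)]
        refine lintegral_congr fun t => (ofReal_norm _).trans (enorm_eq_nnnorm _)
      rw [ENNReal.ofReal_pow hRnn, hRl]
      exact sqLintegralLe _ _ ((hDcont_t.nnnorm.measurable).coe_nnreal_ennreal).aemeasurable
    calc ∫⁻ y, (‖Fd y‖₊ : ℝ≥0∞) ^ 2 ∂volume
        ≤ ∫⁻ y, ENNReal.ofReal (‖v‖ ^ 2) *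
            (∫⁻ t in Set.Icc (0:ℝ) 1, (‖D (x + t • v, y)‖₊ : ℝ≥0∞) ^ 2) ∂volume :=
          lintegral_mono hC
      _ = ENNReal.ofReal (‖v‖ ^ 2) * ∫⁻ y, (∫⁻ t in Set.Icc (0:ℝ) 1,
            (‖D (x + t • v, y)‖₊ : ℝ≥0∞) ^ 2) ∂volume := by
          have hmeas_yt : Measurable fun q : (EuclideanSpace ℝ (Fin m)) × ℝ =>
              (‖D (x + q.2 • v, q.1)‖₊ : ℝ≥0∞) ^ 2 := by
            have hcq : Continuous fun q : (EuclideanSpace ℝ (Fin m)) × ℝ =>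
                D (x + q.2 • v, q.1) :=
              hD_cont.comp ((continuous_const.add (continuous_snd.smul continuous_const)).prodMk
                continuous_fst)
            exact ((hcq.nnnorm.measurable).coe_nnreal_ennreal).pow_const 2
          rw [lintegral_const_mul _ hmeas_yt.lintegral_prod_right']
      _ = ENNReal.ofReal (‖v‖ ^ 2) * ∫⁻ t in Set.Icc (0:ℝ) 1, H (x + t • v) := by
          congr 1
          have hmeas_yt : Measurable fun q : (EuclideanSpace ℝ (Fin m)) × ℝ =>
              (‖D (x + q.2 • v, q.1)‖₊ : ℝ≥0∞) ^ 2 := by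
            have hcq : Continuous fun q : (EuclideanSpace ℝ (Fin m)) × ℝ =>
                D (x + q.2 • v, q.1) :=
              hD_cont.comp ((continuous_const.add (continuous_snd.smul continuous_const)).prodMk
                continuous_fst)
            exact ((hcq.nnnorm.measurable).coe_nnreal_ennreal).pow_const 2
          rw [lintegral_lintegral_swap hmeas_yt.aemeasurable]
  -- assemble
  have hcore := coreBound (fun x' => Real.sqrt (μk x')) hs_meas H hH_meas hHfin hkey
  borelize (EuclideanSpace ℝ (Fin k) →L[ℝ] ℝ)
  have hL_meas : Measurable fun x => ‖fderiv ℝ (fun x' => Real.sqrt (μk x')) x‖ ^ 2 :=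
    ((measurable_fderiv ℝ _).norm).pow_const 2
  have hnn_eq : ∀ x : EuclideanSpace ℝ (Fin k),
      ((‖(‖fderiv ℝ (fun x' => Real.sqrt (μk x')) x‖ ^ 2 : ℝ)‖₊ : ℝ≥0∞)) =
        ENNReal.ofReal (‖fderiv ℝ (fun x' => Real.sqrt (μk x')) x‖ ^ 2) := fun x => by
    rw [← enorm_eq_nnnorm, ← ofReal_norm, Real.norm_eq_abs, abs_of_nonneg (by positivity)]
  have hint : Integrable (fun x => ‖fderiv ℝ (fun x' => Real.sqrt (μk x')) x‖ ^ 2) := by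
    refine ⟨hL_meas.aestronglyMeasurable, ?_⟩
    show (∫⁻ x, ((‖(‖fderiv ℝ (fun x' => Real.sqrt (μk x')) x‖ ^ 2 : ℝ)‖₊ : ℝ≥0∞)) ∂volume) < ⊤
    calc ∫⁻ x, ((‖(‖fderiv ℝ (fun x' => Real.sqrt (μk x')) x‖ ^ 2 : ℝ)‖₊ : ℝ≥0∞)) ∂volume
        = ∫⁻ x, ENNReal.ofReal (‖fderiv ℝ (fun x' => Real.sqrt (μk x')) x‖ ^ 2) ∂volume :=
          lintegral_congr hnn_eq
      _ ≤ ∫⁻ x, H x ∂volume := hcore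
      _ < ⊤ := hHfin.lt_top
  refine ⟨hmem, hint, ?_⟩
  rw [integral_eq_lintegral_of_nonneg_ae (Eventually.of_forall fun x => by positivity)
    hL_meas.aestronglyMeasurable]
  have h2 : ∫ p, ‖D p‖ ^ 2 = (∫⁻ x, H x ∂volume).toReal := by
    rw [← hIeq, hIof, ENNReal.toReal_ofReal (integral_nonneg fun p => by positivity)]
  rw [h2]
  exact ENNReal.toReal_mono hHfin hcore
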